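/- Let G be a finite simple graph on n ≥ 1 vertices, let d ≥ 0 be an integer, and let A be a real symmetric n × n matrix indexed by V(G) such that |A_{u,v}| ≤ 1 for all u, v and A_{u,v} = 0 whenever u and v are not adjacent in G. Then χ^d(G) ≥ ⌈ max{ n/(n − n_d^+(A)), n/(n − n_d^-(A)) } ⌉. -/

import Mathlib

open SimpleGraph Finset Matrix

namespace ImproperPaper

variable {V W : Type*}

/-- The strong product of two simple graphs. -/
def strongProd (G : SimpleGraph V) (H : SimpleGraph W) : SimpleGraph (V × W) where
  Adj p q := (p.1 = q.1 ∧ H.Adj p.2 q.2) ∨ (G.Adj p.1 q.1 ∧ p.2 = q.2) ∨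
    (G.Adj p.1 q.1 ∧ H.Adj p.2 q.2)
  symm := ⟨by
    rintro ⟨a, b⟩ ⟨x, y⟩ (⟨h1, h2⟩ | ⟨h1, h2⟩ | ⟨h1, h2⟩)
    · exact Or.inl ⟨h1.symm, h2.symm⟩
    · exact Or.inr (Or.inl ⟨h1.symm, h2.symm⟩)
    · exact Or.inr (Or.inr ⟨h1.symm, h2.symm⟩)⟩
  loopless := ⟨by
    rintro ⟨a, b⟩ (⟨h1, h2⟩ | ⟨h1, h2⟩ | ⟨h1, h2⟩)
    · exact H.irrefl h2
    · exact G.irrefl h1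
    · exact G.irrefl h1⟩

/-- The lexicographical product of two simple graphs. -/
def lexProd (G : SimpleGraph V) (H : SimpleGraph W) : SimpleGraph (V × W) where
  Adj p q := G.Adj p.1 q.1 ∨ (p.1 = q.1 ∧ H.Adj p.2 q.2)
  symm := ⟨by
    rintro ⟨a, b⟩ ⟨x, y⟩ (h | ⟨h1, h2⟩)
    · exact Or.inl h.symm
    · exact Or.inr ⟨h1.symm, h2.symm⟩⟩
  loopless := ⟨by
    rintro ⟨a, b⟩ (h | ⟨h1, h2⟩)
    · exact G.irrefl h
    · exact H.irrefl h2⟩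

instance {G : SimpleGraph V} {H : SimpleGraph W} [DecidableEq V] [DecidableEq W]
    [DecidableRel G.Adj] [DecidableRel H.Adj] : DecidableRel (strongProd G H).Adj := fun p q =>
  show Decidable ((p.1 = q.1 ∧ H.Adj p.2 q.2) ∨ (G.Adj p.1 q.1 ∧ p.2 = q.2) ∨
    (G.Adj p.1 q.1 ∧ H.Adj p.2 q.2)) from inferInstance

/-- A colouring is `d`-improper if every colour class induces a subgraph of
maximum degree at most `d`. -/
def IsImproperColoring (G : SimpleGraph V) (d : ℕ) {α : Type*} (c : V → α) : Prop :=
  ∀ v : V, ({w | G.Adj v w ∧ c w = c v} : Set V).ncard ≤ d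

/-- The `d`-improper chromatic number. -/
noncomputable def improperChromaticNumber (G : SimpleGraph V) (d : ℕ) : ℕ :=
  sInf {n | ∃ c : V → Fin n, IsImproperColoring G d c}

/-- A colouring is `t`-clustered if every monochromatic connected component has at
most `t` vertices. -/
def IsClusteredColoring (G : SimpleGraph V) (t : ℕ) {α : Type*} (c : V → α) : Prop :=
  ∀ v : V,
    ({w | Relation.ReflTransGen (fun a b => G.Adj a b ∧ c a = c b) v w} : Set V).ncard ≤ t

/-- The `t`-clustered chromatic number. -/
noncomputable def clusteredChromaticNumber (G : SimpleGraph V) (t : ℕ) : ℕ :=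
  sInf {n | ∃ c : V → Fin n, IsClusteredColoring G t c}

/-- The chromatic number: least `n` admitting a proper colouring with `n` colours. -/
noncomputable def chromNum (G : SimpleGraph V) : ℕ :=
  sInf {n | ∃ c : V → Fin n, ∀ u v, G.Adj u v → c u ≠ c v}

/-- The `b`-fold `d`-improper chromatic number: least number of colours in an assignment
of `b` colours to each vertex such that, for every colour `x`, the set of vertices whose
colour set contains `x` induces a subgraph of maximum degree at most `d`. -/
noncomputable def bFoldImproperChromaticNumber (G : SimpleGraph V) (b d : ℕ) : ℕ :=
  sInf {n | ∃ c : V → Finset (Fin n), (∀ v, (c v).card = b) ∧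
    ∀ v : V, ∀ x ∈ c v, ({w | G.Adj v w ∧ x ∈ c w} : Set V).ncard ≤ d}

/-- The (proper) `b`-fold chromatic number. -/
noncomputable def bFoldChromaticNumber (G : SimpleGraph V) (b : ℕ) : ℕ :=
  bFoldImproperChromaticNumber G b 0

/-- The `b`-fold `t`-clustered chromatic number. -/
noncomputable def bFoldClusteredChromaticNumber (G : SimpleGraph V) (b t : ℕ) : ℕ :=
  sInf {n | ∃ c : V → Finset (Fin n), (∀ v, (c v).card = b) ∧
    ∀ x : Fin n, ∀ v : V, x ∈ c v →
      ({w | Relation.ReflTransGen (fun a b' => G.Adj a b' ∧ x ∈ c a ∧ x ∈ c b') v w} :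
        Set V).ncard ≤ t}

/-- The fractional chromatic number `χ_f(G) = inf { χ_b(G)/b : b ≥ 1 }`. -/
noncomputable def fracChromaticNumber (G : SimpleGraph V) : ℝ :=
  sInf {x : ℝ | ∃ b : ℕ, 0 < b ∧ x = (bFoldChromaticNumber G b : ℝ) / b}

/-- The fractional `d`-improper chromatic number. -/
noncomputable def fracImproperChromaticNumber (G : SimpleGraph V) (d : ℕ) : ℝ :=
  sInf {x : ℝ | ∃ b : ℕ, 0 < b ∧ x = (bFoldImproperChromaticNumber G b d : ℝ) / b}

/-- The fractional `t`-clustered chromatic number. -/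
noncomputable def fracClusteredChromaticNumber (G : SimpleGraph V) (t : ℕ) : ℝ :=
  sInf {x : ℝ | ∃ b : ℕ, 0 < b ∧ x = (bFoldClusteredChromaticNumber G b t : ℝ) / b}

/-- `lam` lists the eigenvalues of the Hermitian matrix `A` (with multiplicity) in
non-increasing order. -/
def IsEigList {n : ℕ} {A : Matrix (Fin n) (Fin n) ℝ} (hA : A.IsHermitian)
    (lam : Fin n → ℝ) : Prop :=
  Antitone lam ∧ ∃ σ : Equiv.Perm (Fin n), lam = hA.eigenvalues ∘ σ

/-- The largest size of a vertex subset inducing a subgraph of maximum degree at most `d`. -/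
noncomputable def maxImproperIndep (G : SimpleGraph V) (d : ℕ) : ℕ :=
  sSup {k | ∃ s : Set V, s.ncard = k ∧ ∀ v ∈ s, ({w | w ∈ s ∧ G.Adj v w} : Set V).ncard ≤ d}

end ImproperPaper

open Matrix Finset in
private 
lemma quad_abs_le {V : Type*} [Fintype V] [DecidableEq V] (G : SimpleGraph V)
    [DecidableRel G.Adj] (d : ℕ) (A : Matrix V V ℝ)
    (hbd : ∀ u v : V, |A u v| ≤ 1) (hz : ∀ u v : V, ¬ G.Adj u v → A u v = 0)
    (S : Finset V) (hS : ∀ v ∈ S, (S.filter (G.Adj v)).card ≤ d)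
    (x : V → ℝ) (hx : ∀ v ∉ S, x v = 0) :
    |∑ u, ∑ v, A u v * x u * x v| ≤ d * ∑ v, x v ^ 2 := by
  have habs : |∑ u, ∑ v, A u v * x u * x v| ≤
      ∑ u, ∑ v, if u ∈ S ∧ v ∈ S ∧ G.Adj u v then |x u| * |x v| else 0 := by
    refine (Finset.abs_sum_le_sum_abs _ _).trans (Finset.sum_le_sum fun u _ => ?_)
    refine (Finset.abs_sum_le_sum_abs _ _).trans (Finset.sum_le_sum fun v _ => ?_)
    by_cases h : u ∈ S ∧ v ∈ S ∧ G.Adj u v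
    · rw [if_pos h, abs_mul, abs_mul]
      have := mul_le_mul_of_nonneg_right
        (mul_le_mul_of_nonneg_right (hbd u v) (abs_nonneg (x u))) (abs_nonneg (x v))
      simpa using this
    · rw [if_neg h]
      push_neg at h
      by_cases hu : u ∈ S
      · by_cases hv : v ∈ S
        · rw [hz u v (h hu hv)]; simp
        · rw [hx v hv]; simp
      · rw [hx u hu]; simp
  have hhalf : ∀ u v : V, (if u ∈ S ∧ v ∈ S ∧ G.Adj u v then |x u| * |x v| else 0) ≤
      (if u ∈ S ∧ v ∈ S ∧ G.Adj u v then (x u ^ 2 + x v ^ 2) / 2 else 0) := by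
    intro u v
    by_cases h : u ∈ S ∧ v ∈ S ∧ G.Adj u v
    · rw [if_pos h, if_pos h]
      nlinarith [sq_nonneg (|x u| - |x v|), sq_abs (x u), sq_abs (x v), abs_nonneg (x u), abs_nonneg (x v)]
    · simp [h]
  have hswap : ∑ u, ∑ v, (if u ∈ S ∧ v ∈ S ∧ G.Adj u v then x v ^ 2 / 2 else 0)
      = ∑ u, ∑ v, (if u ∈ S ∧ v ∈ S ∧ G.Adj u v then x u ^ 2 / 2 else 0) := by
    rw [Finset.sum_comm]
    refine Finset.sum_congr rfl fun u _ => Finset.sum_congr rfl fun v _ => ?_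
    by_cases h : u ∈ S ∧ v ∈ S ∧ G.Adj u v
    · rw [if_pos ⟨h.2.1, h.1, h.2.2.symm⟩, if_pos h]
    · rw [if_neg, if_neg h]
      rintro ⟨h1, h2, h3⟩; exact h ⟨h2, h1, h3.symm⟩
  have hmain : ∑ u, ∑ v, (if u ∈ S ∧ v ∈ S ∧ G.Adj u v then |x u| * |x v| else 0) ≤
      ∑ u, ∑ v, (if u ∈ S ∧ v ∈ S ∧ G.Adj u v then x u ^ 2 else 0) := by
    calc ∑ u, ∑ v, (if u ∈ S ∧ v ∈ S ∧ G.Adj u v then |x u| * |x v| else 0)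
        ≤ ∑ u, ∑ v, (if u ∈ S ∧ v ∈ S ∧ G.Adj u v then (x u ^ 2 + x v ^ 2) / 2 else 0) :=
          Finset.sum_le_sum fun u _ => Finset.sum_le_sum fun v _ => hhalf u v
      _ = (∑ u, ∑ v, (if u ∈ S ∧ v ∈ S ∧ G.Adj u v then x u ^ 2 / 2 else 0)) +
          (∑ u, ∑ v, (if u ∈ S ∧ v ∈ S ∧ G.Adj u v then x v ^ 2 / 2 else 0)) := by
          rw [← Finset.sum_add_distrib]
          refine Finset.sum_congr rfl fun u _ => ?_
          rw [← Finset.sum_add_distrib]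
          refine Finset.sum_congr rfl fun v _ => ?_
          by_cases h : u ∈ S ∧ v ∈ S ∧ G.Adj u v <;> simp [h] <;> ring
      _ = ∑ u, ∑ v, (if u ∈ S ∧ v ∈ S ∧ G.Adj u v then x u ^ 2 else 0) := by
          rw [hswap, ← Finset.sum_add_distrib]
          refine Finset.sum_congr rfl fun u _ => ?_
          rw [← Finset.sum_add_distrib]
          refine Finset.sum_congr rfl fun v _ => ?_
          by_cases h : u ∈ S ∧ v ∈ S ∧ G.Adj u v <;> simp [h] <;> ring
  have hdeg : ∑ u, ∑ v, (if u ∈ S ∧ v ∈ S ∧ G.Adj u v then x u ^ 2 else 0) ≤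
      d * ∑ v, x v ^ 2 := by
    rw [Finset.mul_sum]
    refine Finset.sum_le_sum fun u _ => ?_
    by_cases hu : u ∈ S
    · have heq : ∑ v, (if u ∈ S ∧ v ∈ S ∧ G.Adj u v then x u ^ 2 else 0)
          = ((S.filter (G.Adj u)).card : ℝ) * x u ^ 2 := by
        have hfe : (fun v => if u ∈ S ∧ v ∈ S ∧ G.Adj u v then x u ^ 2 else 0)
            = fun v => if v ∈ S.filter (G.Adj u) then x u ^ 2 else 0 := by
          funext v
          by_cases h : v ∈ S ∧ G.Adj u v
          · rw [if_pos ⟨hu, h⟩, if_pos (Finset.mem_filter.mpr ⟨h.1, h.2⟩)]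
          · rw [if_neg (by tauto), if_neg (by rw [Finset.mem_filter]; tauto)]
        rw [hfe, Finset.sum_ite_mem, Finset.univ_inter, Finset.sum_const, nsmul_eq_mul]
      rw [heq]
      have h1 : ((S.filter (G.Adj u)).card : ℝ) ≤ (d : ℝ) := by
        exact_mod_cast hS u hu
      nlinarith [sq_nonneg (x u)]
    · have heq : ∑ v, (if u ∈ S ∧ v ∈ S ∧ G.Adj u v then x u ^ 2 else 0) = 0 :=
        Finset.sum_eq_zero fun v _ => if_neg (by tauto)
      rw [heq]; positivity
  linarith [habs.trans hmain, hdeg]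

open Matrix Finset in

lemma key_count {V : Type*} [Fintype V] [DecidableEq V] (G : SimpleGraph V)
    [DecidableRel G.Adj] (d : ℕ) (A : Matrix V V ℝ) (hA : A.IsHermitian)
    (hbd : ∀ u v : V, |A u v| ≤ 1) (hz : ∀ u v : V, ¬ G.Adj u v → A u v = 0)
    (S : Finset V) (hS : ∀ v ∈ S, (S.filter (G.Adj v)).card ≤ d)
    (ε : ℝ) (hε : |ε| = 1) (Tf : Finset V)
    (hT : ∀ i ∈ Tf, (d : ℝ) < ε * hA.eigenvalues i)
    (hquad : ∀ x : V → ℝ, (∀ v ∉ S, x v = 0) →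
      |∑ u, ∑ v, A u v * x u * x v| ≤ d * ∑ v, x v ^ 2) :
    S.card + Tf.card ≤ Fintype.card V := by
  by_contra hlt
  push_neg at hlt
  set b := hA.eigenvectorBasis with hb
  set lam := hA.eigenvalues with hlam
  set P : Submodule ℝ (EuclideanSpace ℝ V) :=
    Submodule.span ℝ (Set.range fun i : Tf => b (i : V)) with hP
  set Q : Submodule ℝ (EuclideanSpace ℝ V) :=
    Submodule.span ℝ (Set.range fun v : S => (EuclideanSpace.single (v : V) (1 : ℝ))) with hQ
  have hbli : LinearIndependent ℝ (fun i : Tf => b (i : V)) :=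
    (b.orthonormal.comp _ Subtype.val_injective).linearIndependent
  have hqon : Orthonormal ℝ (fun v : S => (EuclideanSpace.single (v : V) (1 : ℝ))) :=
    (EuclideanSpace.orthonormal_single (𝕜 := ℝ) (ι := V)).comp _ Subtype.val_injective
  have hqli := hqon.linearIndependent
  have hPrank : Module.finrank ℝ P = Tf.card := by
    rw [hP, finrank_span_eq_card hbli, Fintype.card_coe]
  have hQrank : Module.finrank ℝ Q = S.card := by
    rw [hQ, finrank_span_eq_card hqli, Fintype.card_coe]
  have hsum := Submodule.finrank_sup_add_finrank_inf_eq P Q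
  have hle : Module.finrank ℝ ↥(P ⊔ Q) ≤ Fintype.card V := by
    refine (Submodule.finrank_le _).trans_eq ?_
    exact finrank_euclideanSpace
  have hpos : 0 < Module.finrank ℝ ↥(P ⊓ Q) := by omega
  obtain ⟨⟨x, hxm⟩, hxne0⟩ := Module.finrank_pos_iff_exists_ne_zero.mp hpos
  have hxne : x ≠ 0 := fun h => hxne0 (by simp [h])
  obtain ⟨c, hc⟩ := (Submodule.mem_span_range_iff_exists_fun ℝ).mp hxm.1
  obtain ⟨a, ha⟩ := (Submodule.mem_span_range_iff_exists_fun ℝ).mp hxm.2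
  -- support of x
  have hsupp : ∀ v ∉ S, x v = 0 := by
    intro v hv
    have h1 : (∑ w : S, a w • (EuclideanSpace.single (w : V) (1:ℝ))) v = x v := congrFun (congrArg WithLp.ofLp ha) v
    rw [← h1, WithLp.ofLp_sum, Finset.sum_apply]
    refine Finset.sum_eq_zero fun w _ => ?_
    have hwv : v ≠ (w : V) := fun h => hv (h ▸ w.2)
    simp [EuclideanSpace.single_apply, hwv]
  -- orthonormality as sums
  have horth : ∀ i j : V, ∑ u, b i u * b j u = if i = j then 1 else 0 := by
    intro i j
    have h := b.orthonormal
    rw [orthonormal_iff_ite] at h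
    have := h i j
    simpa [PiLp.inner_apply, RCLike.inner_apply, conj_trivial, mul_comm] using this
  -- coefficients
  have hxfun : ∀ u, x u = ∑ j : Tf, c j * b (j : V) u := by
    intro u
    have h1 : (∑ j : Tf, c j • b (j : V)) u = x u := congrFun (congrArg WithLp.ofLp hc) u
    rw [← h1, WithLp.ofLp_sum, Finset.sum_apply]
    exact Finset.sum_congr rfl fun j _ => rfl
  have hcoef : ∀ i : Tf, ∑ u, b (i : V) u * x u = c i := by
    intro i
    calc ∑ u, b (i : V) u * x u = ∑ u, ∑ j : Tf, c j * (b (i:V) u * b (j:V) u) := by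
          refine Finset.sum_congr rfl fun u _ => ?_
          rw [hxfun u, Finset.mul_sum]
          exact Finset.sum_congr rfl fun j _ => by ring
      _ = ∑ j : Tf, c j * ∑ u, b (i:V) u * b (j:V) u := by
          rw [Finset.sum_comm]
          exact Finset.sum_congr rfl fun j _ => by rw [Finset.mul_sum]
      _ = c i := by
          rw [Finset.sum_eq_single i]
          · rw [horth, if_pos rfl, mul_one]
          · intro j _ hji
            rw [horth, if_neg (fun h => hji (Subtype.ext h).symm), mul_zero]
          · intro h; exact absurd (Finset.mem_univ i) h
  -- norm identity
  have hnorm : ∑ u, x u ^ 2 = ∑ j : Tf, c j ^ 2 := by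
    calc ∑ u, x u ^ 2 = ∑ u, ∑ j : Tf, c j * (b (j:V) u * x u) := by
          refine Finset.sum_congr rfl fun u _ => ?_
          rw [pow_two]
          conv_lhs => rw [hxfun u]
          rw [Finset.sum_mul]
          exact Finset.sum_congr rfl fun j _ => by rw [← hxfun u]; ring
      _ = ∑ j : Tf, c j * ∑ u, b (j:V) u * x u := by
          rw [Finset.sum_comm]
          exact Finset.sum_congr rfl fun j _ => by rw [Finset.mul_sum]
      _ = ∑ j : Tf, c j ^ 2 := Finset.sum_congr rfl fun j _ => by rw [hcoef j]; ring
  -- quadratic form value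
  have hAx : ∀ u, (A *ᵥ (x : V → ℝ)) u = ∑ j : Tf, c j * (lam (j:V) * b (j:V) u) := by
    intro u
    have h2 : A.mulVecLin (x : V → ℝ) = ∑ j : Tf, c j • A.mulVecLin (b (j:V) : V → ℝ) := by
      conv_lhs => rw [show (x : V → ℝ) = ∑ j : Tf, c j • (b (j:V) : V → ℝ) from by rw [← hc, WithLp.ofLp_sum]; simp only [WithLp.ofLp_smul]]
      rw [map_sum]
      exact Finset.sum_congr rfl fun j _ => by rw [_root_.map_smul]
    have h3 : (A *ᵥ (x : V → ℝ)) u = (∑ j : Tf, c j • A.mulVecLin (b (j:V) : V → ℝ)) u := by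
      rw [← h2]; rfl
    rw [h3, Finset.sum_apply]
    refine Finset.sum_congr rfl fun j _ => ?_
    have h4 : A.mulVecLin (b (j:V) : V → ℝ) = lam (j:V) • (b (j:V) : V → ℝ) := by
      rw [Matrix.mulVecLin_apply]
      exact hA.mulVec_eigenvectorBasis (j:V)
    rw [h4]
    simp [mul_comm, mul_assoc, mul_left_comm]
  have hqv : ∑ u, ∑ v, A u v * x u * x v = ∑ j : Tf, lam (j:V) * c j ^ 2 := by
    calc ∑ u, ∑ v, A u v * x u * x v = ∑ u, x u * (A *ᵥ (x : V → ℝ)) u := by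
          refine Finset.sum_congr rfl fun u _ => ?_
          rw [Matrix.mulVec, dotProduct, Finset.mul_sum]
          exact Finset.sum_congr rfl fun v _ => by ring
      _ = ∑ u, ∑ j : Tf, c j * lam (j:V) * (b (j:V) u * x u) := by
          refine Finset.sum_congr rfl fun u _ => ?_
          rw [hAx u, Finset.mul_sum]
          exact Finset.sum_congr rfl fun j _ => by ring
      _ = ∑ j : Tf, c j * lam (j:V) * ∑ u, b (j:V) u * x u := by
          rw [Finset.sum_comm]
          exact Finset.sum_congr rfl fun j _ => by rw [Finset.mul_sum]
      _ = ∑ j : Tf, lam (j:V) * c j ^ 2 :=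
          Finset.sum_congr rfl fun j _ => by rw [hcoef j]; ring
  -- strict inequality
  obtain ⟨j0, hj0⟩ : ∃ j0 : Tf, c j0 ≠ 0 := by
    by_contra hall
    push_neg at hall
    refine hxne (PiLp.ext fun u => ?_)
    rw [hxfun u]
    simp [hall]
  have hstrict : ∑ j : Tf, (d:ℝ) * c j ^ 2 < ∑ j : Tf, (ε * lam (j:V)) * c j ^ 2 := by
    refine Finset.sum_lt_sum (fun j _ => ?_) ⟨j0, Finset.mem_univ j0, ?_⟩
    · exact mul_le_mul_of_nonneg_right (le_of_lt (hT (j:V) j.2)) (sq_nonneg _)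
    · exact mul_lt_mul_of_pos_right (hT (j0:V) j0.2) (by positivity)
  have habs := hquad (x : V → ℝ) hsupp
  have h1 : ε * (∑ u, ∑ v, A u v * x u * x v) = ∑ j : Tf, (ε * lam (j:V)) * c j ^ 2 := by
    rw [hqv, Finset.mul_sum]
    exact Finset.sum_congr rfl fun j _ => by ring
  have h2 : ε * (∑ u, ∑ v, A u v * x u * x v) ≤ |∑ u, ∑ v, A u v * x u * x v| := by
    calc ε * (∑ u, ∑ v, A u v * x u * x v) ≤ |ε * (∑ u, ∑ v, A u v * x u * x v)| := le_abs_self _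
      _ = |∑ u, ∑ v, A u v * x u * x v| := by rw [abs_mul, hε, one_mul]
  have h3 : (d:ℝ) * ∑ u, x u ^ 2 = ∑ j : Tf, (d:ℝ) * c j ^ 2 := by
    rw [hnorm, Finset.mul_sum]
  linarith

open ImproperPaper in
theorem stmt_12 {V : Type*} [Fintype V] [DecidableEq V] [Nonempty V] (G : SimpleGraph V)
    (d : ℕ) (A : Matrix V V ℝ) (hA : A.IsHermitian)
    (hbd : ∀ u v : V, |A u v| ≤ 1) (hz : ∀ u v : V, ¬ G.Adj u v → A u v = 0) :
    ⌈max ((Fintype.card V : ℝ) /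
          ((Fintype.card V : ℝ) - (({i : V | (d : ℝ) < hA.eigenvalues i} : Set V).ncard : ℝ)))
        ((Fintype.card V : ℝ) /
          ((Fintype.card V : ℝ) - (({i : V | hA.eigenvalues i < -(d : ℝ)} : Set V).ncard : ℝ)))⌉₊ ≤
      improperChromaticNumber G d := by
  classical
  haveI : DecidableRel G.Adj := fun a b => Classical.dec _
  set n := Fintype.card V with hn
  set Tp : Finset V := Finset.univ.filter (fun i => (d:ℝ) < hA.eigenvalues i) with hTpdef
  set Tm : Finset V := Finset.univ.filter (fun i => hA.eigenvalues i < -(d:ℝ)) with hTmdef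
  have hTp : ({i : V | (d : ℝ) < hA.eigenvalues i} : Set V).ncard = Tp.card := by
    rw [Set.ncard_eq_toFinset_card']
    congr 1
    ext i
    simp [hTpdef]
  have hTm : ({i : V | hA.eigenvalues i < -(d : ℝ)} : Set V).ncard = Tm.card := by
    rw [Set.ncard_eq_toFinset_card']
    congr 1
    ext i
    simp [hTmdef]
  have keyp : ∀ S : Finset V, (∀ v ∈ S, (S.filter (G.Adj v)).card ≤ d) →
      S.card + Tp.card ≤ n := by
    intro S hS
    refine key_count G d A hA hbd hz S hS 1 (by norm_num) Tp (fun i hi => ?_) ?_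
    · rw [one_mul]
      exact (Finset.mem_filter.mp hi).2
    · exact fun x hx => quad_abs_le G d A hbd hz S hS x hx
  have keym : ∀ S : Finset V, (∀ v ∈ S, (S.filter (G.Adj v)).card ≤ d) →
      S.card + Tm.card ≤ n := by
    intro S hS
    refine key_count G d A hA hbd hz S hS (-1) (by norm_num) Tm (fun i hi => ?_) ?_
    · have := (Finset.mem_filter.mp hi).2
      linarith
    · exact fun x hx => quad_abs_le G d A hbd hz S hS x hx
  obtain ⟨v0⟩ := (inferInstance : Nonempty V)
  have hsing : ∀ v ∈ ({v0} : Finset V), (({v0} : Finset V).filter (G.Adj v)).card ≤ d := by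
    intro v hv
    rw [Finset.mem_singleton] at hv
    subst hv
    rw [Finset.filter_singleton, if_neg (G.irrefl (v := v))]
    simp
  have hple : Tp.card + 1 ≤ n := by
    have := keyp {v0} hsing
    simpa [Finset.card_singleton, add_comm] using this
  have hmle : Tm.card + 1 ≤ n := by
    have := keym {v0} hsing
    simpa [Finset.card_singleton, add_comm] using this
  -- bound for any admissible colouring
  have hcol : ∀ (k : ℕ) (c : V → Fin k), IsImproperColoring G d c →
      ∀ (T : Finset V), (∀ S : Finset V, (∀ v ∈ S, (S.filter (G.Adj v)).card ≤ d) →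
        S.card + T.card ≤ n) → n ≤ k * (n - T.card) := by
    intro k c hcI T hkey
    have hfib : (Finset.univ : Finset V).card =
        ∑ j : Fin k, ((Finset.univ : Finset V).filter (fun v => c v = j)).card :=
      Finset.card_eq_sum_card_fiberwise (fun v _ => Finset.mem_univ (c v))
    have hfiber_le : ∀ j : Fin k,
        ((Finset.univ : Finset V).filter (fun v => c v = j)).card ≤ n - T.card := by
      intro j
      set Sj := (Finset.univ : Finset V).filter (fun v => c v = j) with hSj
      have hSjdeg : ∀ v ∈ Sj, (Sj.filter (G.Adj v)).card ≤ d := by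
        intro v hv
        have hvj : c v = j := (Finset.mem_filter.mp hv).2
        have hncard := hcI v
        have heq : ({w | G.Adj v w ∧ c w = c v} : Set V).ncard =
            (Sj.filter (G.Adj v)).card := by
          rw [Set.ncard_eq_toFinset_card']
          congr 1
          ext w
          simp only [Set.mem_toFinset, Set.mem_setOf_eq, hSj, Finset.mem_filter,
            Finset.mem_univ, true_and, hvj]
          tauto
        rw [heq] at hncard
        exact hncard
      exact Nat.le_sub_of_add_le (hkey Sj hSjdeg)
    calc n = ∑ j : Fin k, ((Finset.univ : Finset V).filter (fun v => c v = j)).card := by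
          rw [← hfib, Finset.card_univ]
      _ ≤ ∑ _j : Fin k, (n - T.card) := Finset.sum_le_sum fun j _ => hfiber_le j
      _ = k * (n - T.card) := by rw [Finset.sum_const, Finset.card_univ, Fintype.card_fin,
          smul_eq_mul]
  -- real-number bound
  have hreal : ∀ (k : ℕ) (T : Finset V), T.card + 1 ≤ n → n ≤ k * (n - T.card) →
      (n : ℝ) / ((n : ℝ) - T.card) ≤ k := by
    intro k T h1 h2
    have hTle : T.card ≤ n := le_trans (Nat.le_succ _) h1
    have hden : (0:ℝ) < (n : ℝ) - T.card := by
      have : (T.card : ℝ) + 1 ≤ (n : ℝ) := by exact_mod_cast h1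
      linarith
    rw [div_le_iff₀ hden]
    have h3 : (n : ℝ) ≤ (k : ℝ) * ((n - T.card : ℕ) : ℝ) := by exact_mod_cast h2
    rwa [Nat.cast_sub hTle] at h3
  rw [hTp, hTm]
  -- nonemptiness of the colouring set
  have hne : ∃ c : V → Fin n, IsImproperColoring G d c := by
    refine ⟨fun v => Fintype.equivFin V v, fun v => ?_⟩
    have hempty : ({w | G.Adj v w ∧ Fintype.equivFin V w = Fintype.equivFin V v} : Set V)
        = ∅ := by
      ext w
      simp only [Set.mem_setOf_eq, Set.mem_empty_iff_false, iff_false, not_and]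
      intro hadj hcw
      exact absurd ((Fintype.equivFin V).injective hcw ▸ hadj) (G.irrefl (v := v))
    rw [hempty]
    simp
  refine le_csInf ⟨n, hne⟩ fun k hk => ?_
  obtain ⟨c, hc⟩ := hk
  rw [Nat.ceil_le]
  refine max_le ?_ ?_
  · exact hreal k Tp hple (hcol k c hc Tp keyp)
  · exact hreal k Tm hmle (hcol k c hc Tm keym)
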